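/- arXiv:2509.17841 — 4 statements merged into one kernel-verified Lean document; each statement's English description precedes it below -/
import Mathlib

section
/- Let f : ℕ → ℝ be superadditive with f(n) ≥ n for all n, and let s ≥ 1 be real. Define g(n) = f(n)^s / n for n ≥ 1, g₂(n) = max_{1 ≤ i ≤ n} g(i), and f₂'(n) = g₂(n)². Then for every n ≥ 1: f(n)^{2s} ≤ n² · f₂'(n) ≤ 4 · f(n)^{2s}. -/
/-- For superadditive `f` with `f(n) ≥ n` and real `s ≥ 1`, with `g(n) = f(n)^s / n`,
`g₂(n) = max_{1 ≤ i ≤ n} g(i)` and `f₂'(n) = g₂(n)²`, we have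
`f(n)^{2s} ≤ n²·f₂'(n) ≤ 4·f(n)^{2s}` for all `n ≥ 1`. -/
theorem squeeze_f2' (f : ℕ → ℝ) (hf : ∀ n : ℕ, (n : ℝ) ≤ f n)
    (hsup : ∀ n m, f n + f m ≤ f (n + m)) (s : ℝ) (hs : 1 ≤ s)
    (g g₂ f₂' : ℕ → ℝ)
    (hg : ∀ n, g n = f n ^ s / (n : ℝ))
    (hg₂ : ∀ n, 1 ≤ n → IsGreatest (g '' Set.Icc 1 n) (g₂ n))
    (hf₂ : ∀ n, f₂' n = g₂ n ^ 2) :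
    ∀ n : ℕ, 1 ≤ n →
      f n ^ (2 * s) ≤ (n : ℝ) ^ 2 * f₂' n ∧ (n : ℝ) ^ 2 * f₂' n ≤ 4 * f n ^ (2 * s) := by
  intro n hn
  classical
  have hn0 : (0:ℝ) < n := by exact_mod_cast hn
  have hfpos : ∀ k : ℕ, 1 ≤ k → (0:ℝ) < f k := fun k hk =>
    lt_of_lt_of_le (by exact_mod_cast hk) (hf k)
  have hfn0 : (0:ℝ) < f n := hfpos n hn
  obtain ⟨hmem, hub⟩ := hg₂ n hn
  have hsq : ∀ x : ℝ, 0 ≤ x → x ^ (2*s) = (x ^ s)^2 := by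
    intro x hx
    rw [mul_comm, Real.rpow_mul hx]
    rw [show ((2:ℝ) = ((2:ℕ):ℝ)) by norm_num, Real.rpow_natCast]
  -- lower bound
  have hlow : f n ^ (2*s) ≤ (n:ℝ)^2 * f₂' n := by
    have h1 : g n ≤ g₂ n := hub ⟨n, ⟨hn, le_refl n⟩, rfl⟩
    rw [hg n] at h1
    have h2 : f n ^ s ≤ (n:ℝ) * g₂ n := by
      calc f n ^ s = (n:ℝ) * (f n ^ s / n) := by field_simp
        _ ≤ (n:ℝ) * g₂ n := by nlinarith
    have h3 : (f n ^ s)^2 ≤ ((n:ℝ) * g₂ n)^2 :=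
      pow_le_pow_left₀ (Real.rpow_nonneg hfn0.le s) h2 2
    rw [hsq _ hfn0.le, hf₂ n]
    nlinarith
  refine ⟨hlow, ?_⟩
  -- find maximal m achieving the maximum
  obtain ⟨m0, hm0mem, hm0⟩ := hmem
  have hPm : 1 ≤ Nat.findGreatest (fun m => 1 ≤ m ∧ g m = g₂ n) n ∧
      g (Nat.findGreatest (fun m => 1 ≤ m ∧ g m = g₂ n) n) = g₂ n :=
    Nat.findGreatest_spec (P := fun m => 1 ≤ m ∧ g m = g₂ n) (m := m0) hm0mem.2 ⟨hm0mem.1, hm0⟩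
  set m := Nat.findGreatest (fun m => 1 ≤ m ∧ g m = g₂ n) n with hmdef
  have hm1 : 1 ≤ m := hPm.1
  have hmn : m ≤ n := Nat.findGreatest_le n
  have hgm : g m = g₂ n := hPm.2
  have hm0' : (0:ℝ) < m := by exact_mod_cast hm1
  have hfm : (0:ℝ) < f m := hfpos m hm1
  -- claim : n < 2*m
  have hlt : n < 2 * m := by
    by_contra h
    push_neg at h
    have h2m1 : 1 ≤ 2*m := by omega
    have hgub : g (2*m) ≤ g₂ n := hub ⟨2*m, ⟨h2m1, h⟩, rfl⟩
    have hf2m : 2 * f m ≤ f (2*m) := by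
      have := hsup m m
      rw [show 2*m = m+m from two_mul m]
      linarith
    have hrp : (2 * f m) ^ s ≤ f (2*m) ^ s :=
      Real.rpow_le_rpow (by positivity) hf2m (by linarith)
    have h2s : (2:ℝ) ≤ (2:ℝ) ^ s := by
      calc (2:ℝ) = (2:ℝ)^(1:ℝ) := (Real.rpow_one 2).symm
        _ ≤ (2:ℝ)^s := Real.rpow_le_rpow_of_exponent_le (by norm_num) hs
    have hmul : ((2:ℝ)*f m)^s = 2^s * f m ^ s := Real.mul_rpow (by norm_num) hfm.le
    have hge : g m ≤ g (2*m) := by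
      rw [hg m, hg (2*m)]
      push_cast
      rw [div_le_div_iff₀ hm0' (by positivity)]
      have h1 : 2 * f m ^ s ≤ f (2*m)^s := by
        rw [hmul] at hrp
        nlinarith [Real.rpow_nonneg hfm.le s]
      nlinarith [Real.rpow_nonneg hfm.le s]
    have hgeq : g (2*m) = g₂ n := le_antisymm hgub (hgm ▸ hge)
    have : 2*m ≤ m := Nat.le_findGreatest h ⟨h2m1, hgeq⟩
    omega
  -- monotonicity : f m ≤ f n
  have hfmn : f m ≤ f n := by
    have key := hsup m (n - m)
    rw [Nat.add_sub_cancel' hmn] at key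
    have h0 : (0:ℝ) ≤ f (n - m) := le_trans (Nat.cast_nonneg _) (hf _)
    linarith
  -- upper bound
  have hfr : f m ^ (2*s) ≤ f n ^ (2*s) :=
    Real.rpow_le_rpow hfm.le hfmn (by linarith)
  have hgm' : g₂ n = f m ^ s / m := by rw [← hgm, hg m]
  have hnm : (n:ℝ) ≤ 2 * m := by exact_mod_cast hlt.le
  have hA : (n:ℝ) * (f m^s / m) ≤ 2 * f m^s := by
    rw [mul_div_assoc'] at *
    rw [div_le_iff₀ hm0']
    nlinarith [Real.rpow_nonneg hfm.le s]
  have hB : ((n:ℝ) * (f m^s / m))^2 ≤ (2 * f m^s)^2 :=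
    pow_le_pow_left₀ (by positivity) hA 2
  rw [hf₂ n, hgm']
  have e1 : (n:ℝ)^2 * (f m^s / m)^2 = ((n:ℝ) * (f m^s / m))^2 := by ring
  have e2 : (2 * f m^s)^2 = 4 * f m ^ (2*s) := by rw [hsq _ hfm.le]; ring
  rw [e1]
  calc ((n:ℝ) * (f m^s / m))^2 ≤ (2 * f m^s)^2 := hB
    _ = 4 * f m ^ (2*s) := e2
    _ ≤ 4 * f n ^ (2*s) := by linarith
end

section
/- Let A be a type and w : List A a list that is not duplicate-free (i.e. some letter occurs twice in w). Then w has a prefix of the form u ++ (x :: v) ++ [x] for some x : A and lists u, v : List A such that the list u ++ (x :: v) has pairwise distinct entries. In particular the suffix x :: (v ++ [x]) begins and ends with the same letter, no proper subword of it begins and ends with the same letter, and no letter of u occurs in x :: (v ++ [x]). -/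
private theorem first_split {A : Type*} {a : A} :
    ∀ {l : List A}, a ∈ l → ∃ s t, l = s ++ a :: t ∧ a ∉ s := by
  classical
  intro l h
  induction l with
  | nil => cases h
  | cons b l ih =>
    by_cases hab : a = b
    · exact ⟨[], l, by simp [hab], by simp⟩
    · obtain ⟨s, t, h1, h2⟩ := ih (by
        rcases List.mem_cons.1 h with h' | h'
        · exact absurd h' hab
        · exact h')
      exact ⟨b :: s, t, by simp [h1], by simp [hab, h2]⟩

private theorem min_repeat {A : Type*} :
    ∀ (w : List A), ¬ w.Nodup → ∃ p x, (p ++ [x]) <+: w ∧ p.Nodup ∧ x ∈ p := by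
  intro w
  induction w with
  | nil => intro h; exact absurd List.nodup_nil h
  | cons a w ih =>
    intro h
    by_cases hw : w.Nodup
    · have ha : a ∈ w := by
        by_contra hna; exact h (List.nodup_cons.2 ⟨hna, hw⟩)
      obtain ⟨s, t, hst, has⟩ := first_split ha
      refine ⟨a :: s, a, ⟨t, by simp [hst]⟩, ?_, by simp⟩
      exact List.nodup_cons.2 ⟨has, (List.IsPrefix.sublist ⟨a :: t, hst.symm⟩).nodup hw⟩
    · obtain ⟨p, x, ⟨q, hq⟩, hp, hx⟩ := ih hw
      by_cases hap : a ∈ p ++ [x]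
      · obtain ⟨s, t, hst, has⟩ := first_split hap
        have hs : s <+: p := by
          have hlen : s.length ≤ p.length := by
            have := congrArg List.length hst
            simp at this; omega
          have : s <+: p ++ [x] := ⟨a :: t, hst.symm⟩
          exact List.prefix_of_prefix_length_le this (List.prefix_append p [x]) hlen
        refine ⟨a :: s, a, ?_, List.nodup_cons.2 ⟨has, hs.sublist.nodup hp⟩, by simp⟩
        refine ⟨t ++ q, ?_⟩
        have h2 : a :: w = a :: ((p ++ [x]) ++ q) := by simp [hq]
        rw [h2, hst]; simp
      · refine ⟨a :: p, x, ⟨q, by simp [hq]⟩, List.nodup_cons.2 ⟨fun h' => hap (by simp [h']), hp⟩, List.mem_cons_of_mem _ hx⟩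

/-- Every word with a repeated letter has a tight prefix: a prefix of the form
`u ++ (x :: v) ++ [x]` where `u ++ (x :: v)` has pairwise distinct entries.  In particular
the suffix `x :: (v ++ [x])` is revolving, and no letter of `u` occurs in it. -/
theorem exists_tight_prefix {A : Type*} (w : List A) (hw : ¬ w.Nodup) :
    ∃ (x : A) (u v : List A),
      (u ++ (x :: v) ++ [x]) <+: w ∧
      (u ++ (x :: v)).Nodup ∧
      ∀ a ∈ u, a ∉ (x :: (v ++ [x])) := by
  obtain ⟨p, x, hpre, hp, hx⟩ := min_repeat w hw
  obtain ⟨u, v, huv, hxu⟩ := first_split hx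
  subst huv
  refine ⟨x, u, v, hpre, hp, ?_⟩
  intro a hau ha
  have hdisj := List.disjoint_of_nodup_append hp
  rcases List.mem_cons.1 ha with rfl | h'
  · exact hxu hau
  · rcases List.mem_append.1 h' with h'' | h''
    · exact hdisj hau (List.mem_cons_of_mem _ h'')
    · simp at h''; subst h''; exact hxu hau
end

section
/- Let G be a group, X a type, and π : FreeGroup X → G a surjective group homomorphism. Let Z = X ⊕ X and let θ : FreeGroup Z → G be the homomorphism with θ(of(inl x)) = π(of x) and θ(of(inr x)) = π(of x)⁻¹. Let L ⊆ FreeGroup Z be the set of elements represented by nonempty positive words (products of generators of(z) for z : Z, with no inverses) lying in ker θ. Then ker θ equals the normal closure of L in FreeGroup Z. -/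
/-- Let `π : FreeGroup X → G` be surjective, `Z = X ⊕ X`, and `θ : FreeGroup Z → G` send
`of (inl x) ↦ π (of x)` and `of (inr x) ↦ π (of x)⁻¹`.  Then the kernel of `θ` is the
normal closure of the set `L` of nonempty positive words lying in `ker θ`. -/
theorem positive_presentation {G : Type*} [Group G] {X : Type*}
    (π : FreeGroup X →* G) (hπ : Function.Surjective π)
    (θ : FreeGroup (X ⊕ X) →* G)
    (hθ : θ = FreeGroup.lift
      (Sum.elim (fun x => π (FreeGroup.of x)) (fun x => (π (FreeGroup.of x))⁻¹)))
    (L : Set (FreeGroup (X ⊕ X)))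
    (hL : L = {w | w ∈ Submonoid.closure
        (Set.range (FreeGroup.of : (X ⊕ X) → FreeGroup (X ⊕ X))) ∧ w ≠ 1 ∧ θ w = 1}) :
    θ.ker = Subgroup.normalClosure L := by
  set M := Submonoid.closure (Set.range (FreeGroup.of : (X ⊕ X) → FreeGroup (X ⊕ X))) with hM
  set N := Subgroup.normalClosure L with hN
  have hLN : L ⊆ N := Subgroup.subset_normalClosure
  have hNker : N ≤ θ.ker := Subgroup.normalClosure_le_normal (fun w hw => (hL ▸ hw).2.2)
  have hpair : ∀ z : X ⊕ X,
      FreeGroup.of z * FreeGroup.of (Sum.elim Sum.inr Sum.inl z) ∈ L := by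
    intro z
    rw [hL]
    refine ⟨mul_mem (Submonoid.subset_closure ⟨z, rfl⟩)
      (Submonoid.subset_closure ⟨_, rfl⟩), ?_, ?_⟩
    · intro h
      have := congrArg (FreeGroup.lift fun _ : X ⊕ X => Multiplicative.ofAdd (1 : ℤ)) h
      simp only [map_mul, FreeGroup.lift_apply_of, map_one, ← ofAdd_add] at this
      exact absurd (Multiplicative.ofAdd.injective (this.trans (ofAdd_zero).symm)) (by norm_num)
    · cases z <;> simp [hθ]
  set φ := QuotientGroup.mk' N with hφ
  have hker : φ.ker = N := QuotientGroup.ker_mk' N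
  have key : ∀ w : FreeGroup (X ⊕ X), ∃ w' ∈ M, φ w = φ w' := by
    intro w
    induction w using FreeGroup.induction_on with
    | C1 => exact ⟨1, one_mem M, rfl⟩
    | of z => exact ⟨FreeGroup.of z, Submonoid.subset_closure ⟨z, rfl⟩, rfl⟩
    | inv_of z _ =>
      refine ⟨FreeGroup.of (Sum.elim Sum.inr Sum.inl z),
        Submonoid.subset_closure ⟨_, rfl⟩, ?_⟩
      have h1 : φ (FreeGroup.of z) * φ (FreeGroup.of (Sum.elim Sum.inr Sum.inl z)) = 1 := by
        rw [← map_mul, ← MonoidHom.mem_ker, hker]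
        exact hLN (hpair z)
      rw [map_inv]
      exact (eq_inv_of_mul_eq_one_right h1).symm
    | mul a b ha hb =>
      obtain ⟨a', ha', haeq⟩ := ha
      obtain ⟨b', hb', hbeq⟩ := hb
      exact ⟨a' * b', mul_mem ha' hb', by rw [map_mul, map_mul, haeq, hbeq]⟩
  ext w
  simp only [MonoidHom.mem_ker]
  constructor
  · intro hw
    obtain ⟨w', hw'M, heq⟩ := key w
    have hmem : w⁻¹ * w' ∈ N := by
      rw [← hker, MonoidHom.mem_ker, map_mul, map_inv, heq, inv_mul_cancel]
    rcases eq_or_ne w' 1 with h1 | h1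
    · subst h1
      have : w⁻¹ ∈ N := by simpa using hmem
      simpa using N.inv_mem this
    · have hθw' : θ w' = 1 := by
        have h2 := hNker hmem
        rw [MonoidHom.mem_ker, map_mul, map_inv, hw] at h2
        simpa using h2
      have hw'N : w' ∈ N := hLN (hL ▸ ⟨hw'M, h1, hθw'⟩)
      have hrw : w = w' * (w⁻¹ * w')⁻¹ := by group
      rw [hrw]
      exact mul_mem hw'N (N.inv_mem hmem)
  · intro hw
    exact hNker hw
end

section
/- With the necklace setup on ZMod n (white set W, black set B), let v₁, v₂, v₃ ∈ B be distinct black beads such that v₂ lies on the counterclockwise open arc from v₁ to v₃ and this arc contains at most J black beads. Let y₁ be the number of white beads on the counterclockwise open arc from v₁ to v₂ and y₂ the number on the counterclockwise open arc from v₂ to v₃. Then for B' = B \ {v₂}: μ_J(W,B') ≤ μ_J(W,B) − y₁·y₂. -/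
/-- The least positive number of counterclockwise steps from `a` to `b` on the cycle `ZMod n`. -/
def stepsTo {n : ℕ} [NeZero n] (a b : ZMod n) : ℕ :=
  Nat.find (p := fun d => 0 < d ∧ a + (d : ZMod n) = b) <| by
    by_cases hba : b = a
    · refine ⟨n, Nat.pos_of_ne_zero (NeZero.ne n), ?_⟩
      simp [hba, ZMod.natCast_self]
    · refine ⟨(b - a).val, ?_, ?_⟩
      · refine Nat.pos_of_ne_zero fun hz => hba ?_
        have h0 : b - a = 0 := (ZMod.val_eq_zero _).mp hz
        exact sub_eq_zero.mp h0
      · have h1 : (((b - a).val : ℕ) : ZMod n) = b - a := ZMod.natCast_rightInverse (b - a)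
        rw [h1]; ring

/-- The counterclockwise open arc from `a` to `b` on the necklace `ZMod n`:
the beads strictly between `a` and `b`. -/
def arc {n : ℕ} [NeZero n] (a b : ZMod n) : Finset (ZMod n) :=
  (Finset.Ico 1 (stepsTo a b)).image fun k : ℕ => a + (k : ZMod n)

/-- `Pset W B j` is the set of ordered pairs of distinct white beads `(o₁, o₂)` for which
the counterclockwise open arc from `o₁` to `o₂` contains at least `j` black beads. -/
def Pset {n : ℕ} [NeZero n] (W B : Finset (ZMod n)) (j : ℕ) : Finset (ZMod n × ZMod n) :=
  (W ×ˢ W).filter fun p => p.1 ≠ p.2 ∧ j ≤ ((arc p.1 p.2) ∩ B).card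

/-- The `J`-mixture of the necklace with white beads `W` and black beads `B`. -/
def mixture {n : ℕ} [NeZero n] (J : ℕ) (W B : Finset (ZMod n)) : ℕ :=
  ∑ j ∈ Finset.Icc 1 J, (Pset W B j).card

section NecklaceAux
variable {n : ℕ} [NeZero n]

lemma stepsTo_spec (a b : ZMod n) : 0 < stepsTo a b ∧ a + (stepsTo a b : ZMod n) = b := by
  unfold stepsTo; exact Nat.find_spec (p := fun d => 0 < d ∧ a + (d : ZMod n) = b) _

lemma stepsTo_pos (a b : ZMod n) : 0 < stepsTo a b := (stepsTo_spec a b).1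
lemma stepsTo_add (a b : ZMod n) : a + (stepsTo a b : ZMod n) = b := (stepsTo_spec a b).2

lemma stepsTo_le (a b : ZMod n) {d : ℕ} (hd : 0 < d) (h : a + (d : ZMod n) = b) :
    stepsTo a b ≤ d := Nat.find_min' _ ⟨hd, h⟩

lemma add_cast_inj (a : ZMod n) {i j : ℕ} (hij : i ≤ j) (h : j - i < n)
    (he : a + (i : ZMod n) = a + (j : ZMod n)) : i = j := by
  have hji : (i : ZMod n) = (j : ZMod n) := add_left_cancel he
  have hz : ((j - i : ℕ) : ZMod n) = 0 := by rw [Nat.cast_sub hij, ← hji, sub_self]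
  have hd := (ZMod.natCast_eq_zero_iff _ _).mp hz
  have := Nat.eq_zero_of_dvd_of_lt hd h
  omega

lemma stepsTo_le_n (a b : ZMod n) : stepsTo a b ≤ n := by
  by_cases hba : b = a
  · exact stepsTo_le a b (Nat.pos_of_ne_zero (NeZero.ne n)) (by simp [hba, ZMod.natCast_self])
  · refine le_trans (stepsTo_le a b (d := (b - a).val) ?_ ?_) (le_of_lt (ZMod.val_lt _))
    · refine Nat.pos_of_ne_zero fun hz => hba ?_
      have h0 : b - a = 0 := (ZMod.val_eq_zero _).mp hz
      exact sub_eq_zero.mp h0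
    · have h1 : (((b - a).val : ℕ) : ZMod n) = b - a := ZMod.natCast_rightInverse (b - a)
      rw [h1]; ring

lemma stepsTo_eq {a b : ZMod n} {s : ℕ} (h1 : 0 < s) (h2 : a + (s : ZMod n) = b)
    (hn : s ≤ n) : stepsTo a b = s := by
  have hle := stepsTo_le a b h1 h2
  have h0 := stepsTo_pos a b
  exact add_cast_inj a hle (by omega) (by rw [stepsTo_add, h2])


lemma mem_arc {a b x : ZMod n} :
    x ∈ arc a b ↔ ∃ k : ℕ, 1 ≤ k ∧ k < stepsTo a b ∧ x = a + (k : ZMod n) := by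
  constructor
  · intro hx
    obtain ⟨k, hk, he⟩ := Finset.mem_image.mp hx
    rw [Finset.mem_Ico] at hk
    exact ⟨k, hk.1, hk.2, he.symm⟩
  · rintro ⟨k, h1, h2, rfl⟩
    exact Finset.mem_image.mpr ⟨k, Finset.mem_Ico.mpr ⟨h1, h2⟩, rfl⟩

end NecklaceAux

/-- Removing a black bead v₂ strictly between black beads v₁ and v₃ (with at most J black
beads on the arc from v₁ to v₃) decreases the J-mixture by at least y₁·y₂, where y₁, y₂
are the numbers of white beads on the arcs from v₁ to v₂ and from v₂ to v₃. -/
theorem mixture_erase_middle_black (n : ℕ) [NeZero n] (J : ℕ) (W B : Finset (ZMod n))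
    (hdisj : Disjoint W B) (v₁ v₂ v₃ : ZMod n)
    (hv₁ : v₁ ∈ B) (hv₂ : v₂ ∈ B) (hv₃ : v₃ ∈ B)
    (h12 : v₁ ≠ v₂) (h23 : v₂ ≠ v₃) (h13 : v₁ ≠ v₃)
    (hmid : v₂ ∈ arc v₁ v₃)
    (hJ : ((arc v₁ v₃) ∩ B).card ≤ J) :
    mixture J W (B.erase v₂) + ((arc v₁ v₂) ∩ W).card * ((arc v₂ v₃) ∩ W).card
      ≤ mixture J W B := by
  classical
  set D := stepsTo v₁ v₃ with hD
  have hDn : D ≤ n := stepsTo_le_n v₁ v₃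
  obtain ⟨k, hk1, hkD, hkv⟩ := mem_arc.mp hmid
  have hadd : v₁ + (D : ZMod n) = v₃ := stepsTo_add v₁ v₃
  have hd₁ : stepsTo v₁ v₂ = k := stepsTo_eq (by omega) hkv.symm (by omega)
  have hd₂ : stepsTo v₂ v₃ = D - k := by
    apply stepsTo_eq (by omega) ?_ (by omega)
    rw [hkv]
    have hc : ((D - k : ℕ) : ZMod n) = (D : ZMod n) - k := Nat.cast_sub (le_of_lt hkD)
    rw [hc, ← hadd]; ring
  set T : Finset (ZMod n × ZMod n) := ((arc v₁ v₂) ∩ W) ×ˢ ((arc v₂ v₃) ∩ W) with hT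
  have pair_struct : ∀ p ∈ T, ∃ s t : ℕ,
      1 ≤ s ∧ s < k ∧ k < t ∧ t < D ∧ p.1 = v₁ + (s : ZMod n) ∧ p.2 = v₁ + (t : ZMod n) := by
    intro p hp
    rw [hT, Finset.mem_product] at hp
    obtain ⟨hp1, hp2⟩ := hp
    obtain ⟨s, hs1, hs2, hse⟩ := mem_arc.mp (Finset.mem_inter.mp hp1).1
    obtain ⟨m, hm1, hm2, hme⟩ := mem_arc.mp (Finset.mem_inter.mp hp2).1
    rw [hd₁] at hs2; rw [hd₂] at hm2
    refine ⟨s, k + m, hs1, hs2, by omega, by omega, hse, ?_⟩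
    rw [hme, hkv]; push_cast; ring
  have key : ∀ p ∈ T, p.1 ≠ p.2 ∧ v₂ ∈ arc p.1 p.2 ∧ arc p.1 p.2 ⊆ arc v₁ v₃ := by
    intro p hp
    obtain ⟨s, t, hs1, hsk, hkt, htD, he1, he2⟩ := pair_struct p hp
    have hst : stepsTo p.1 p.2 = t - s := by
      apply stepsTo_eq (by omega) ?_ (by omega)
      rw [he1, he2]
      have hc : ((t - s : ℕ) : ZMod n) = (t : ZMod n) - s := Nat.cast_sub (by omega)
      rw [hc]; ring
    refine ⟨?_, ?_, ?_⟩
    · intro hcon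
      rw [he1, he2] at hcon
      have := add_cast_inj v₁ (by omega : s ≤ t) (by omega) hcon
      omega
    · rw [mem_arc, hst]
      refine ⟨k - s, by omega, by omega, ?_⟩
      rw [he1, hkv]
      have hc : ((k - s : ℕ) : ZMod n) = (k : ZMod n) - s := Nat.cast_sub (by omega)
      rw [hc]; ring
    · intro x hx
      obtain ⟨u, hu1, hu2, hxe⟩ := mem_arc.mp hx
      rw [hst] at hu2
      rw [mem_arc]
      exact ⟨s + u, by omega, by omega, by rw [hxe, he1]; push_cast; ring⟩
  have hfmem : ∀ p ∈ T, ((arc p.1 p.2) ∩ B).card ∈ Finset.Icc 1 J := by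
    intro p hp
    obtain ⟨hne, hmem2, hsub⟩ := key p hp
    rw [Finset.mem_Icc]
    constructor
    · exact Finset.card_pos.mpr ⟨v₂, Finset.mem_inter.mpr ⟨hmem2, hv₂⟩⟩
    · exact le_trans (Finset.card_le_card (Finset.inter_subset_inter hsub (subset_refl B))) hJ
  have hcard : T.card = ∑ j ∈ Finset.Icc 1 J,
      (T.filter fun p => ((arc p.1 p.2) ∩ B).card = j).card :=
    Finset.card_eq_sum_card_fiberwise hfmem
  have hstep : ∀ j ∈ Finset.Icc 1 J,
      (Pset W (B.erase v₂) j).card + (T.filter fun p => ((arc p.1 p.2) ∩ B).card = j).card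
        ≤ (Pset W B j).card := by
    intro j hj
    rw [Finset.mem_Icc] at hj
    have hsub1 : Pset W (B.erase v₂) j ⊆ Pset W B j := by
      intro p hp
      rw [Pset, Finset.mem_filter] at hp ⊢
      exact ⟨hp.1, hp.2.1, le_trans hp.2.2 (Finset.card_le_card
        (Finset.inter_subset_inter (subset_refl _) (Finset.erase_subset _ _)))⟩
    have hsub2 : (T.filter fun p => ((arc p.1 p.2) ∩ B).card = j) ⊆ Pset W B j := by
      intro p hp
      rw [Finset.mem_filter] at hp
      obtain ⟨hpT, hpf⟩ := hp
      obtain ⟨hne, hmem2, hsub⟩ := key p hpT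
      rw [hT, Finset.mem_product] at hpT
      rw [Pset, Finset.mem_filter, Finset.mem_product]
      exact ⟨⟨(Finset.mem_inter.mp hpT.1).2, (Finset.mem_inter.mp hpT.2).2⟩, hne, le_of_eq hpf.symm⟩
    have hdisj2 : Disjoint (Pset W (B.erase v₂) j)
        (T.filter fun p => ((arc p.1 p.2) ∩ B).card = j) := by
      rw [Finset.disjoint_right]
      intro p hp hp'
      rw [Finset.mem_filter] at hp
      obtain ⟨hpT, hpf⟩ := hp
      obtain ⟨hne, hmem2, hsub⟩ := key p hpT
      rw [Pset, Finset.mem_filter] at hp'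
      have hv2' : v₂ ∈ (arc p.1 p.2) ∩ B := Finset.mem_inter.mpr ⟨hmem2, hv₂⟩
      have he : (arc p.1 p.2) ∩ (B.erase v₂) = ((arc p.1 p.2) ∩ B).erase v₂ := by
        ext x
        simp only [Finset.mem_inter, Finset.mem_erase]
        tauto
      have hcc : ((arc p.1 p.2) ∩ (B.erase v₂)).card = j - 1 := by
        rw [he, Finset.card_erase_of_mem hv2', hpf]
      have hj' := hp'.2.2
      omega
    calc (Pset W (B.erase v₂) j).card
          + (T.filter fun p => ((arc p.1 p.2) ∩ B).card = j).card
        = ((Pset W (B.erase v₂) j) ∪ (T.filter fun p => ((arc p.1 p.2) ∩ B).card = j)).card :=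
          (Finset.card_union_of_disjoint hdisj2).symm
      _ ≤ (Pset W B j).card := Finset.card_le_card (Finset.union_subset hsub1 hsub2)
  have hTcard : T.card = ((arc v₁ v₂) ∩ W).card * ((arc v₂ v₃) ∩ W).card := by
    rw [hT, Finset.card_product]
  have hsum := Finset.sum_le_sum hstep
  rw [Finset.sum_add_distrib] at hsum
  rw [mixture, mixture, ← hTcard, hcard]
  exact hsum
end
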